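/- Let S be a set of unit vectors on the unit circle in ℝ² such that the inner product of any two distinct elements is at most 1 − t for some t ∈ (0, 2]. Then the cardinality of S is at most 2π / arccos(1 − t). -/

import Mathlib

open scoped InnerProductSpace
open Real Metric MeasureTheory

private lemma packing_addCircle (θ : ℝ) (hθ : 0 < θ) (hθπ : θ ≤ π)
    (F : Finset (AddCircle (2 * π))) (hF : ∀ x ∈ F, ∀ y ∈ F, x ≠ y → θ ≤ dist x y) :
    (F.card : ℝ) * θ ≤ 2 * π := by
  haveI : Fact (0 < 2 * π) := ⟨by positivity⟩
  have hdisj : (F : Set (AddCircle (2 * π))).PairwiseDisjoint (fun x => ball x (θ / 2)) := by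
    intro x hx y hy hxy
    apply Set.disjoint_left.mpr
    intro z hzx hzy
    have h1 := mem_ball.mp hzx
    have h2 := mem_ball.mp hzy
    rw [dist_comm] at h1
    have : dist x y < θ := by
      calc dist x y ≤ dist x z + dist z y := dist_triangle ..
        _ < θ / 2 + θ / 2 := add_lt_add h1 h2
        _ = θ := by ring
    linarith [hF x hx y hy hxy]
  have hvol : ∀ x : AddCircle (2 * π), volume (ball x (θ / 2)) = ENNReal.ofReal θ := by
    intro x
    rw [← measure_congr AddCircle.closedBall_ae_eq_ball, AddCircle.volume_closedBall]
    have h2 : 2 * (θ / 2) = θ := by ring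
    rw [h2, min_eq_right (by linarith [pi_pos])]
  have h1 : volume (⋃ x ∈ F, ball x (θ / 2)) = ∑ x ∈ F, volume (ball x (θ / 2)) :=
    measure_biUnion_finset hdisj (fun x _ => measurableSet_ball)
  have h2 : volume (⋃ x ∈ F, ball x (θ / 2)) ≤ volume (Set.univ : Set (AddCircle (2 * π))) :=
    measure_mono (Set.subset_univ _)
  rw [h1, AddCircle.measure_univ] at h2
  simp only [hvol, Finset.sum_const, nsmul_eq_mul] at h2
  have h3 : ENNReal.ofReal ((F.card : ℝ) * θ) ≤ ENNReal.ofReal (2 * π) := by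
    rwa [ENNReal.ofReal_mul (by positivity), ENNReal.ofReal_natCast]
  exact (ENNReal.ofReal_le_ofReal_iff (by positivity)).mp h3

/-- A set of unit vectors on the unit circle in ℝ² with pairwise inner products at most
`1 − t` (for `t ∈ (0, 2]`) has cardinality at most `2π / arccos(1 − t)`. -/
theorem circle_spherical_code_bound (S : Set (EuclideanSpace ℝ (Fin 2))) (t : ℝ)
    (ht : 0 < t) (ht2 : t ≤ 2)
    (hunit : ∀ u ∈ S, ‖u‖ = 1)
    (hsep : ∀ u ∈ S, ∀ v ∈ S, u ≠ v → ⟪u, v⟫_ℝ ≤ 1 - t) :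
    S.Finite ∧ (S.ncard : ℝ) ≤ 2 * Real.pi / Real.arccos (1 - t) := by
  classical
  set θ := Real.arccos (1 - t) with hθdef
  have hθ0 : 0 < θ := Real.arccos_pos.mpr (by linarith)
  have hθπ : θ ≤ π := Real.arccos_le_pi _
  set g : EuclideanSpace ℝ (Fin 2) → ℝ := fun u => Complex.arg ⟨u 0, u 1⟩ with hg
  set f : EuclideanSpace ℝ (Fin 2) → AddCircle (2 * π) := fun u => ((g u : ℝ) : AddCircle (2 * π))
    with hf
  have habs : ∀ u ∈ S, ‖(⟨u 0, u 1⟩ : ℂ)‖ = 1 := by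
    intro u hu
    have h := hunit u hu
    rw [EuclideanSpace.norm_eq, Fin.sum_univ_two] at h
    rw [Complex.norm_def, Complex.normSq_mk]
    have : u 0 * u 0 + u 1 * u 1 = ‖u 0‖ ^ 2 + ‖u 1‖ ^ 2 := by
      simp [Real.norm_eq_abs, sq_abs, sq]
    rw [this]; exact h
  have hne : ∀ u ∈ S, (⟨u 0, u 1⟩ : ℂ) ≠ 0 := by
    intro u hu h
    have := habs u hu
    rw [h] at this; simp at this
  have hcos : ∀ u ∈ S, Real.cos (g u) = u 0 := by
    intro u hu
    rw [hg]; simp only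
    rw [Complex.cos_arg (hne u hu), habs u hu]
    simp
  have hsin : ∀ u ∈ S, Real.sin (g u) = u 1 := by
    intro u hu
    rw [hg]; simp only
    rw [Complex.sin_arg, habs u hu]
    simp
  have hinner : ∀ u ∈ S, ∀ v ∈ S, ⟪u, v⟫_ℝ = Real.cos (g u - g v) := by
    intro u hu v hv
    rw [Real.cos_sub, hcos u hu, hcos v hv, hsin u hu, hsin v hv]
    simp [PiLp.inner_apply, Fin.sum_univ_two, RCLike.inner_apply]
    ring
  have hdist : ∀ u ∈ S, ∀ v ∈ S, u ≠ v → θ ≤ dist (f u) (f v) := by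
    intro u hu v hv huv
    have hd : dist (f u) (f v) = ‖((g u - g v : ℝ) : AddCircle (2 * π))‖ := by
      rw [dist_eq_norm, hf]
      simp only
      rw [← AddCircle.coe_sub]
    set d := ‖((g u - g v : ℝ) : AddCircle (2 * π))‖ with hdd
    have hcosd : Real.cos d = ⟪u, v⟫_ℝ := by
      rw [hdd, AddCircle.norm_eq, Real.cos_abs, Real.cos_sub_int_mul_two_pi,
        hinner u hu v hv]
    have hd0 : 0 ≤ d := norm_nonneg _
    have hdπ : d ≤ π := by
      have := AddCircle.norm_le_half_period (2 * π)
        (x := ((g u - g v : ℝ) : AddCircle (2 * π))) (by positivity)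
      rwa [abs_of_pos (by positivity), show 2 * π / 2 = π by ring] at this
    rw [hd]
    calc θ ≤ Real.arccos (Real.cos d) := by
            have h1 : Real.cos d ≤ 1 - t := hcosd ▸ hsep u hu v hv huv
            rw [hθdef, Real.arccos, Real.arccos]
            linarith [Real.monotone_arcsin h1]
      _ = d := Real.arccos_cos hd0 hdπ
  have hinj : Set.InjOn f S := by
    intro u hu v hv huv
    by_contra h
    have := hdist u hu v hv h
    rw [huv, dist_self] at this
    linarith
  have key : ∀ F : Finset (EuclideanSpace ℝ (Fin 2)), ↑F ⊆ S →
      (F.card : ℝ) ≤ 2 * π / θ := by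
    intro F hFS
    have hcard : (F.image f).card = F.card :=
      Finset.card_image_of_injOn (hinj.mono hFS)
    have hsep' : ∀ x ∈ F.image f, ∀ y ∈ F.image f, x ≠ y → θ ≤ dist x y := by
      intro x hx y hy hxy
      obtain ⟨u, hu, rfl⟩ := Finset.mem_image.mp hx
      obtain ⟨v, hv, rfl⟩ := Finset.mem_image.mp hy
      exact hdist u (hFS hu) v (hFS hv) (fun h => hxy (by rw [h]))
    have := packing_addCircle θ hθ0 hθπ (F.image f) hsep'
    rw [hcard] at this
    rw [le_div_iff₀ hθ0]
    exact this
  have hfin : S.Finite := by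
    by_contra h
    obtain ⟨T, hTS, hTfin, hTcard⟩ :=
      (show S.Infinite from h).exists_subset_ncard_eq (⌊2 * π / θ⌋₊ + 1)
    have := key hTfin.toFinset (by simpa using hTS)
    rw [Set.ncard_eq_toFinset_card _ hTfin] at hTcard
    rw [hTcard] at this
    have := Nat.le_floor this
    omega
  refine ⟨hfin, ?_⟩
  have := key hfin.toFinset (by simp)
  rwa [Set.ncard_eq_toFinset_card _ hfin]
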